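/- Let f : 2^[n] → ℝ be defined by f(S) = |S|². For any nonempty S ⊆ [n], define prices p_i = |S| if i ∈ S (i.e. p_i = f(S)/|S| = |S|) and p_i = 2n² otherwise. Then D_f(p) = {∅, S}. -/
import Mathlib


/-- For f(S) = |S|², at the given prices the demand set is exactly {∅, S}. -/
theorem stmt10 (n : ℕ) (f : Finset (Fin n) → ℝ)
    (hf : ∀ T, f T = (T.card : ℝ) ^ 2)
    (S : Finset (Fin n)) (hS : S.Nonempty)
    (p : Fin n → ℝ)
    (hp : ∀ i, p i = if i ∈ S then (S.card : ℝ) else 2 * (n : ℝ) ^ 2) :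
    ∀ T : Finset (Fin n),
      (∀ W, f W - ∑ i ∈ W, p i ≤ f T - ∑ i ∈ T, p i) ↔ (T = ∅ ∨ T = S) := by
  have hn : 1 ≤ n := by
    obtain ⟨i, _⟩ := hS; exact i.pos
  have hs1 : 1 ≤ S.card := Finset.card_pos.mpr hS
  have hsn : S.card ≤ n := by
    simpa using Finset.card_le_univ S
  -- sum of prices over T
  have hsum : ∀ T : Finset (Fin n), ∑ i ∈ T, p i
      = ((T ∩ S).card : ℝ) * S.card + ((T \ S).card : ℝ) * (2 * (n : ℝ) ^ 2) := by
    intro T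
    rw [← Finset.sum_inter_add_sum_sdiff T S (fun i => p i)]
    congr 1
    · rw [Finset.sum_congr rfl (fun i hi => by
        rw [hp i, if_pos (Finset.mem_inter.mp hi).2]), Finset.sum_const,
        nsmul_eq_mul]
    · rw [Finset.sum_congr rfl (fun i hi => by
        rw [hp i, if_neg (Finset.mem_sdiff.mp hi).2]), Finset.sum_const,
        nsmul_eq_mul]
  have hcard : ∀ T : Finset (Fin n), (T ∩ S).card + (T \ S).card = T.card :=
    fun T => Finset.card_inter_add_card_sdiff T S
  have key : ∀ T : Finset (Fin n),
      f T - ∑ i ∈ T, p i ≤ 0 ∧ (f T - ∑ i ∈ T, p i = 0 ↔ T = ∅ ∨ T = S) := by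
    intro T
    set a := (T ∩ S).card with ha
    set b := (T \ S).card with hb
    have hTcard : a + b = T.card := hcard T
    have haS : a ≤ S.card := Finset.card_le_card (Finset.inter_subset_right)
    have hTn : T.card ≤ n := by simpa using Finset.card_le_univ T
    have hu : f T - ∑ i ∈ T, p i
        = ((a : ℝ) + b) ^ 2 - (a : ℝ) * S.card - (b : ℝ) * (2 * (n : ℝ) ^ 2) := by
      rw [hf T, hsum T, ← hTcard]
      push_cast
      ring
    rcases Nat.eq_zero_or_pos b with hb0 | hbpos
    · -- T ⊆ S
      have hTS : T ⊆ S := by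
        rw [← Finset.sdiff_eq_empty_iff_subset]
        exact Finset.card_eq_zero.mp hb0
      have haT : a = T.card := by omega
      constructor
      · rw [hu, hb0]
        push_cast
        nlinarith [(show (a:ℝ) ≤ S.card from Nat.cast_le.mpr haS),
          (Nat.cast_nonneg a : (0:ℝ) ≤ a)]
      · constructor
        · intro h0
          rw [hu, hb0] at h0
          push_cast at h0
          have : (a : ℝ) * ((a : ℝ) - S.card) = 0 := by nlinarith
          rcases mul_eq_zero.mp this with h | h
          · left
            have : a = 0 := by exact_mod_cast h
            exact Finset.card_eq_zero.mp (by omega)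
          · right
            have : a = S.card := by
              have : (a : ℝ) = S.card := by linarith
              exact_mod_cast this
            exact Finset.eq_of_subset_of_card_le hTS (by omega)
        · rintro (h | h)
          · subst h; simp [hf]
          · have ha' : a = S.card := by rw [ha, h, Finset.inter_self]
            have hb' : b = 0 := by
              rw [hb, h, Finset.sdiff_self, Finset.card_empty]
            rw [hu, ha', hb']
            push_cast
            ring
    · -- b ≥ 1 : strictly negative
      have hstrict : f T - ∑ i ∈ T, p i < 0 := by
        rw [hu]
        have h1 : ((a : ℝ) + b) ^ 2 ≤ (n : ℝ) ^ 2 := by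
          have : (a : ℝ) + b ≤ n := by exact_mod_cast hTcard ▸ hTn
          nlinarith [Nat.cast_nonneg a (α := ℝ), Nat.cast_nonneg b (α := ℝ)]
        have h2 : (1 : ℝ) ≤ b := by exact_mod_cast hbpos
        have h3 : (1 : ℝ) ≤ n := by exact_mod_cast hn
        nlinarith [Nat.cast_nonneg a (α := ℝ), Nat.cast_nonneg (S.card) (α := ℝ),
          mul_nonneg (Nat.cast_nonneg a (α := ℝ)) (Nat.cast_nonneg (S.card) (α := ℝ))]
      refine ⟨le_of_lt hstrict, ?_, ?_⟩
      · intro h0; exact absurd h0 (ne_of_lt hstrict)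
      · rintro (h | h)
        · have : b = 0 := by rw [hb, h]; simp
          omega
        · have : b = 0 := by rw [hb, h, Finset.sdiff_self, Finset.card_empty]
          omega
  intro T
  constructor
  · intro h
    have h0 : f ∅ - ∑ i ∈ (∅ : Finset (Fin n)), p i = 0 := by
      simp [hf]
    have hle := h ∅
    rw [h0] at hle
    exact (key T).2.mp (le_antisymm (key T).1 hle)
  · intro h
    intro W
    rw [(key T).2.mpr h]
    exact (key W).1
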